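/- Define truncated exponentiation (1+X)^{[Y]} := ∑_{i=0}^{p−1} (Y choose i) X^i in ℤ_{(p)}[X,Y]. Then for any commutative ring R of characteristic p, any nilpotent element x ∈ R with x^p = 0, and any y, z ∈ R, one has (1+x)^{[y]} · (1+x)^{[z]} = (1+x)^{[y+z]}. -/

import Mathlib

/-- The binomial coefficient `(y choose i) = y(y-1)⋯(y-i+1)/i!` evaluated in a ring `R`:
division by `i!` is via `Ring.inverse` (for `i < p` and `R` of characteristic `p`,
`i!` is invertible in `R`). -/
noncomputable def rchoose {R : Type*} [CommRing R] (y : R) (i : ℕ) : R :=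
  (∏ k ∈ Finset.range i, (y - (k : R))) * Ring.inverse ((i.factorial : R))

open Finset Polynomial


lemma smeval_desc {R : Type*} [CommRing R] (y : R) (n : ℕ) :
    (descPochhammer ℤ n).smeval y = ∏ k ∈ Finset.range n, (y - (k : R)) := by
  induction n with
  | zero => simp [descPochhammer_zero, smeval_one]
  | succ n ih =>
      rw [Finset.prod_range_succ, ← ih, descPochhammer_succ_right, smeval_mul, smeval_sub,
        smeval_X, smeval_natCast]
      simp

lemma isUnit_fac {p : ℕ} (hp : p.Prime) (R : Type*) [CommRing R] [CharP R p]
    {m : ℕ} (hm : m < p) : IsUnit ((m.factorial : R)) := by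
  haveI : Fact p.Prime := ⟨hp⟩
  have h0 : ((m.factorial : ZMod p)) ≠ 0 := by
    rw [Ne, ZMod.natCast_eq_zero_iff, hp.dvd_factorial]
    omega
  have := (isUnit_iff_ne_zero.mpr h0).map (ZMod.castHom (dvd_refl p) R)
  simpa using this

lemma vand {p : ℕ} (hp : p.Prime) {R : Type*} [CommRing R] [CharP R p]
    (y z : R) {n : ℕ} (hn : n < p) :
    rchoose (y + z) n = ∑ ij ∈ antidiagonal n, rchoose y ij.1 * rchoose z ij.2 := by
  have hu := isUnit_fac hp R hn
  refine hu.mul_left_cancel ?_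
  have hcan : (n.factorial : R) * Ring.inverse ((n.factorial : R)) = 1 :=
    Ring.mul_inverse_cancel _ hu
  rw [rchoose, mul_comm (∏ k ∈ Finset.range n, (y + z - (k : R))) _, ← mul_assoc, hcan, one_mul,
    ← smeval_desc, Ring.descPochhammer_smeval_add n (Commute.all y z), Finset.mul_sum]
  refine Finset.sum_congr rfl ?_
  intro ij hij
  have hsum : ij.1 + ij.2 = n := Finset.HasAntidiagonal.mem_antidiagonal.mp hij
  have hi : ij.1 < p := by omega
  have hj : ij.2 < p := by omega
  have h1 : ((ij.1.factorial : R)) * Ring.inverse ((ij.1.factorial : R)) = 1 :=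
    Ring.mul_inverse_cancel _ (isUnit_fac hp R hi)
  have h2 : ((ij.2.factorial : R)) * Ring.inverse ((ij.2.factorial : R)) = 1 :=
    Ring.mul_inverse_cancel _ (isUnit_fac hp R hj)
  have hfac : n.factorial = n.choose ij.1 * ij.1.factorial * ij.2.factorial := by
    rw [← Nat.choose_mul_factorial_mul_factorial (by omega : ij.1 ≤ n)]
    congr 2
    omega
  rw [smeval_desc, smeval_desc, rchoose, rchoose, hfac]
  push_cast
  symm
  calc (↑(n.choose ij.1) * ↑ij.1.factorial * ↑ij.2.factorial : R) *
        ((∏ k ∈ Finset.range ij.1, (y - (k:R))) * Ring.inverse ((ij.1.factorial : R)) *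
          ((∏ k ∈ Finset.range ij.2, (z - (k:R))) * Ring.inverse ((ij.2.factorial : R))))
      = (n.choose ij.1 : R) * ((∏ k ∈ Finset.range ij.1, (y - (k:R))) *
          (∏ k ∈ Finset.range ij.2, (z - (k:R)))) *
          (((ij.1.factorial : R)) * Ring.inverse ((ij.1.factorial : R))) *
          (((ij.2.factorial : R)) * Ring.inverse ((ij.2.factorial : R))) := by ring
    _ = _ := by rw [h1, h2]; ring

/-- Truncated exponentiation `(1+x)^{[y]} = ∑_{i=0}^{p-1} (y choose i) x^i` is
multiplicative in the exponent, for `x` with `x^p = 0` in a commutative ring of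
characteristic `p`. -/
theorem stmt1 (p : ℕ) (hp : p.Prime) (R : Type*) [CommRing R] [CharP R p]
    (x : R) (hx : x ^ p = 0) (y z : R) :
    (∑ i ∈ Finset.range p, rchoose y i * x ^ i) *
      (∑ i ∈ Finset.range p, rchoose z i * x ^ i) =
    ∑ i ∈ Finset.range p, rchoose (y + z) i * x ^ i := by
  have hxk : ∀ k : ℕ, p ≤ k → x ^ k = 0 := by
    intro k hk
    rw [show k = p + (k - p) by omega, pow_add, hx, zero_mul]
  rw [Finset.sum_mul_sum]
  have hL : ∀ i j : ℕ, (rchoose y i * x ^ i) * (rchoose z j * x ^ j)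
      = rchoose y i * rchoose z j * x ^ (i + j) := by
    intro i j; rw [pow_add]; ring
  calc (∑ i ∈ Finset.range p, ∑ j ∈ Finset.range p, rchoose y i * x ^ i * (rchoose z j * x ^ j))
      = ∑ ij ∈ Finset.range p ×ˢ Finset.range p,
          rchoose y ij.1 * rchoose z ij.2 * x ^ (ij.1 + ij.2) := by
        rw [Finset.sum_product]
        exact Finset.sum_congr rfl fun i _ => Finset.sum_congr rfl fun j _ => hL i j
    _ = ∑ ij ∈ (Finset.range p ×ˢ Finset.range p).filter (fun ij => ij.1 + ij.2 < p),
          rchoose y ij.1 * rchoose z ij.2 * x ^ (ij.1 + ij.2) := by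
        have h0 : ∑ ij ∈ (Finset.range p ×ˢ Finset.range p).filter
            (fun ij => ¬ ij.1 + ij.2 < p),
            rchoose y ij.1 * rchoose z ij.2 * x ^ (ij.1 + ij.2) = 0 := by
          refine Finset.sum_eq_zero fun ij hij => ?_
          simp only [Finset.mem_filter, not_lt] at hij
          rw [hxk _ hij.2, mul_zero]
        rw [← Finset.sum_filter_add_sum_filter_not (Finset.range p ×ˢ Finset.range p)
          (fun ij => ij.1 + ij.2 < p), h0, add_zero]
    _ = ∑ ij ∈ (Finset.range p).biUnion (fun n => antidiagonal n),
          rchoose y ij.1 * rchoose z ij.2 * x ^ (ij.1 + ij.2) := by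
        congr 1
        ext ⟨i, j⟩
        simp only [Finset.mem_filter, Finset.mem_product, Finset.mem_range,
          Finset.mem_biUnion, Finset.HasAntidiagonal.mem_antidiagonal]
        constructor
        · rintro ⟨⟨hi, hj⟩, h⟩; exact ⟨i + j, h, rfl⟩
        · rintro ⟨n, hn, rfl⟩; omega
    _ = ∑ n ∈ Finset.range p, ∑ ij ∈ antidiagonal n,
          rchoose y ij.1 * rchoose z ij.2 * x ^ (ij.1 + ij.2) := by
        rw [Finset.sum_biUnion]
        intro a _ b _ hab
        simp only [Finset.disjoint_left, Finset.HasAntidiagonal.mem_antidiagonal]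
        intro ij h1 h2
        exact hab (h1 ▸ h2 ▸ rfl)
    _ = ∑ n ∈ Finset.range p, rchoose (y + z) n * x ^ n := by
        refine Finset.sum_congr rfl fun n hn => ?_
        rw [vand hp y z (Finset.mem_range.mp hn), Finset.sum_mul]
        refine Finset.sum_congr rfl fun ij hij => ?_
        rw [Finset.HasAntidiagonal.mem_antidiagonal.mp hij]
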